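/- arXiv:0801.2263 — 3 statements merged into one kernel-verified Lean document; each statement's English description precedes it below -/
import Mathlib

section
/- Let (X_i)_{i∈ℤ} be a stationary process with values in a finite set E, (T_i)_{i∈ℤ} a regeneration scheme for (X_i), and f : E → ℝ (automatically bounded). Define i(n) = max{k ≥ 1 : T_k < n} if T_1 < n and i(n) = 0 otherwise. Then both boundary terms n^{−1/2} ∑_{i=0}^{T_1−1} f(X_i) and n^{−1/2} ∑_{i=T_{i(n)}}^{n−1} f(X_i) converge to 0 in probability as n → ∞. -/
open MeasureTheory ProbabilityTheory Filter Finset Topology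

open MeasureTheory ProbabilityTheory Filter Finset Topology

namespace Regen

variable {E : Type*} [Fintype E] [Nonempty E] [MeasurableSpace E] [MeasurableSingletonClass E]

/-- Pasts `ω_{-∞}^{-1}`, encoded so that index `n : ℕ` records the coordinate `ω_{-(n+1)}`. -/
abbrev Past (E : Type*) := ℕ → E

/-- A `g`-function: a probability kernel from pasts to the alphabet. -/
structure IsGFunction (g : E → Past E → ℝ) : Prop where
  nonneg : ∀ x ω, 0 ≤ g x ω
  measurable : ∀ x, Measurable (g x)
  sum_one : ∀ ω, ∑ x : E, g x ω = 1

/-- Continuity of a `g`-function (uniform continuity w.r.t. the product topology). -/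
def ContinuousG (g : E → Past E → ℝ) : Prop :=
  ∀ x : E, ∀ ε : ℝ, 0 < ε → ∃ n : ℕ, ∀ ω σ : Past E,
    (∀ i < n, ω i = σ i) → |g x ω - g x σ| < ε

/-- A `g`-function is bounded away from zero. -/
def BddAwayZero (g : E → Past E → ℝ) : Prop := ∃ c : ℝ, 0 < c ∧ ∀ x ω, c ≤ g x ω

/-- A regular `g`-function: continuous and bounded away from zero. -/
def RegularG (g : E → Past E → ℝ) : Prop := IsGFunction g ∧ ContinuousG g ∧ BddAwayZero g

/-- The sequence `a_k = inf_{σ ∈ E^{[-k,-1]}} ∑_{x ∈ E} inf_{ω ∈ E^{ℤ_{<-k}}} g(x | σω)`. -/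
noncomputable def aSeq (g : E → Past E → ℝ) (k : ℕ) : ℝ :=
  ⨅ σ : Fin k → E, ∑ x : E, ⨅ ω : Past E,
    g x (fun n => if h : n < k then σ ⟨n, h⟩ else ω (n - k))

/-- The `k`-th variation of a `g`-function. -/
noncomputable def varSeq (g : E → Past E → ℝ) (k : ℕ) : ℝ :=
  sSup {d : ℝ | ∃ x : E, ∃ ω σ : Past E, (∀ i < k, ω i = σ i) ∧ d = |g x ω - g x σ|}

/-- The shift on two-sided configurations. -/
def shift : (ℤ → E) → (ℤ → E) := fun ω i => ω (i + 1)

/-- The past `(ω_i)_{i ≤ -1}` of a two-sided configuration. -/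
def pastOf (ω : ℤ → E) : Past E := fun n => ω (-(n : ℤ) - 1)

/-- A shift-invariant probability measure `P` on `E^ℤ` is consistent with `g`. -/
def Consistent (g : E → Past E → ℝ) (P : Measure (ℤ → E)) : Prop :=
  MeasurePreserving (shift (E := E)) P P ∧
  ∀ (x : E) (h : (ℤ → E) → ℝ), Measurable h → (∃ M : ℝ, ∀ ω, |h ω| ≤ M) →
    (∀ ω σ : ℤ → E, (∀ i : ℤ, i < 0 → ω i = σ i) → h ω = h σ) →
    ∫ ω, h ω * g x (pastOf ω) ∂P = ∫ ω in {ω : ℤ → E | ω 0 = x}, h ω ∂P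

section Regeneration

variable {Ω : Type*} [MeasurableSpace Ω]

open scoped Classical in
/-- The block of the process `X` between the regeneration times `T i` and `T (i+1)`,
padded by `Sum.inr ()` outside of `[T i, T (i+1))`. -/
noncomputable def block (T : ℤ → Ω → ℤ) (X : ℤ → Ω → E) (i : ℤ) (ω : Ω) : ℕ → E ⊕ Unit :=
  fun n => if (n : ℤ) < T (i + 1) ω - T i ω then Sum.inl (X (T i ω + n) ω) else Sum.inr ()

open scoped Classical in
/-- The process together with the renewal set, as a single `(E × Prop)`-valued process. -/
noncomputable def jointProc (T : ℤ → Ω → ℤ) (X : ℤ → Ω → E) (ω : Ω) : ℤ → E × Prop :=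
  fun t => (X t ω, ∃ i : ℤ, T i ω = t)

/-- A regeneration scheme for a stationary process `X`, as produced by the
Comets–Fernández–Ferrari construction. -/
structure RegenScheme (P : Measure Ω) (X : ℤ → Ω → E) where
  T : ℤ → Ω → ℤ
  measT : ∀ i, Measurable (T i)
  mono : ∀ᵐ ω ∂P, StrictMono fun i => T i ω
  T0_le : ∀ᵐ ω ∂P, T 0 ω ≤ 0
  T1_pos : ∀ᵐ ω ∂P, 0 < T 1 ω
  incr_indep : iIndepFun
    (fun (i : ℕ) (ω : Ω) => T ((i : ℤ) + 2) ω - T ((i : ℤ) + 1) ω) P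
  incr_ident : ∀ i : ℕ, IdentDistrib (fun ω => T ((i : ℤ) + 2) ω - T ((i : ℤ) + 1) ω)
    (fun ω => T 2 ω - T 1 ω) P P
  incr_int : Integrable (fun ω => ((T 2 ω - T 1 ω : ℤ) : ℝ)) P
  one_le_mean : 1 ≤ ∫ ω, ((T 2 ω - T 1 ω : ℤ) : ℝ) ∂P
  size_bias : ∀ k : ℕ, 1 ≤ k →
    (P {ω | T 1 ω - T 0 ω = (k : ℤ)}).toReal
      = (k : ℝ) * (P {ω | T 2 ω - T 1 ω = (k : ℤ)}).toReal
        / ∫ ω, ((T 2 ω - T 1 ω : ℤ) : ℝ) ∂P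
  joint_stationary : Measure.map (fun (z : ℤ → E × Prop) (t : ℤ) => z (t + 1))
      (Measure.map (jointProc T X) P) = Measure.map (jointProc T X) P
  blocks_indep : iIndepFun (fun i : ℤ => block T X i) P
  blocks_ident : ∀ i j : ℤ, i ≠ 0 → j ≠ 0 →
    IdentDistrib (block T X i) (block T X j) P P

/-- Mean length of a regeneration block. -/
noncomputable def RegenScheme.mean {P : Measure Ω} {X : ℤ → Ω → E}
    (R : RegenScheme P X) : ℝ :=
  ∫ ω, ((R.T 2 ω - R.T 1 ω : ℤ) : ℝ) ∂P

/-- The sum of `f` over the block `[T 1, T 2)`. -/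
noncomputable def RegenScheme.blockSum {P : Measure Ω} {X : ℤ → Ω → E}
    (R : RegenScheme P X) (f : E → ℝ) (ω : Ω) : ℝ :=
  ∑ i ∈ Finset.Ico (R.T 1 ω) (R.T 2 ω), f (X i ω)

/-- The limiting variance `σ² = E((∑_{i=T_1}^{T_2-1} f(X_i))²) / E(T_2 - T_1)`. -/
noncomputable def RegenScheme.var {P : Measure Ω} {X : ℤ → Ω → E}
    (R : RegenScheme P X) (f : E → ℝ) : ℝ :=
  (∫ ω, (R.blockSum f ω) ^ 2 ∂P) / R.mean

/-- `i(n) = max {k ≥ 1 : T k < n}` if `T 1 < n`, and `0` otherwise. -/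
noncomputable def RegenScheme.iN {P : Measure Ω} {X : ℤ → Ω → E}
    (R : RegenScheme P X) (n : ℕ) (ω : Ω) : ℤ :=
  if R.T 1 ω < (n : ℤ) then sSup {k : ℤ | 1 ≤ k ∧ R.T k ω < (n : ℤ)} else 0

end Regeneration

/-- Convergence in distribution of real random variables to the centered Gaussian law of
variance `v` (with `N(0,0) = δ_0`), tested against bounded continuous functions. -/
def TendstoGaussian {Ω : Type*} [MeasurableSpace Ω] (P : Measure Ω)
    (Y : ℕ → Ω → ℝ) (v : NNReal) : Prop :=
  ∀ φ : BoundedContinuousFunction ℝ ℝ,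
    Tendsto (fun n => ∫ ω, φ (Y n ω) ∂P) atTop (𝓝 (∫ x, φ x ∂(gaussianReal 0 v)))

/-- `(Y n)_{n ≥ 1}` is bounded in probability. -/
def BoundedInProb {Ω : Type*} [MeasurableSpace Ω] (P : Measure Ω)
    (Y : ℕ → Ω → ℝ) : Prop :=
  ∀ ε : ℝ, 0 < ε → ∃ K : ℝ, ∀ n : ℕ, 1 ≤ n → (P {ω | K < |Y n ω|}).toReal < ε

/-- Normalized partial sums `S_n/√n` of `f` along the process `X`. -/
noncomputable def normSum {Ω : Type*} (X : ℤ → Ω → E) (f : E → ℝ) (n : ℕ) (ω : Ω) : ℝ :=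
  (∑ i ∈ Finset.range n, f (X (i : ℤ) ω)) / Real.sqrt n

end Regen


section AuxLemmas

open MeasureTheory Filter Finset

variable {E : Type*} [Fintype E] [Nonempty E] [MeasurableSpace E] [MeasurableSingletonClass E]
variable {Ω : Type*} [MeasurableSpace Ω] {P : Measure Ω}
variable {X : ℤ → Ω → E}

private lemma aux_sum_bound (f : E → ℝ) (s : Finset ℤ) (x : ℤ → E) :
    |∑ i ∈ s, f (x i)| ≤ s.card * (1 + ∑ y : E, |f y|) := by
  calc |∑ i ∈ s, f (x i)| ≤ ∑ i ∈ s, |f (x i)| := Finset.abs_sum_le_sum_abs _ _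
    _ ≤ ∑ _i ∈ s, (1 + ∑ y : E, |f y|) := by
        refine Finset.sum_le_sum fun i _ => ?_
        have : |f (x i)| ≤ ∑ y : E, |f y| :=
          Finset.single_le_sum (fun y _ => abs_nonneg (f y)) (Finset.mem_univ _)
        linarith
    _ = s.card * (1 + ∑ y : E, |f y|) := by rw [Finset.sum_const, nsmul_eq_mul]

private lemma aux_no_renewal (R : Regen.RegenScheme P X) {ω : Ω}
    (h1 : StrictMono fun i => R.T i ω) (h2 : R.T 0 ω ≤ 0) (h3 : 0 < R.T 1 ω)
    {n c : ℕ} (hcn : (c : ℤ) < n)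
    (hlt : R.T (R.iN n ω) ω < (n : ℤ) - c) :
    ∀ t : ℤ, (n : ℤ) - c ≤ t → t < n → ∀ i : ℤ, R.T i ω ≠ t := by
  intro t ht1 ht2 i hti
  have hle : ∀ k : ℤ, 1 ≤ k → k ≤ R.T k ω := by
    refine fun k hk =>
      Int.le_induction (motive := fun j _ => j ≤ R.T j ω) (by omega) (fun m hm ih => ?_) k hk
    have := h1 (show m < m + 1 by omega)
    simp only at this
    omega
  by_cases hT1 : R.T 1 ω < (n : ℤ)
  · have hS : ({k : ℤ | 1 ≤ k ∧ R.T k ω < (n : ℤ)}).Nonempty := ⟨1, le_refl 1, hT1⟩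
    have hB : BddAbove {k : ℤ | 1 ≤ k ∧ R.T k ω < (n : ℤ)} :=
      ⟨n, fun k hk => le_of_lt (lt_of_le_of_lt (hle k hk.1) hk.2)⟩
    have hiN : R.iN n ω = sSup {k : ℤ | 1 ≤ k ∧ R.T k ω < (n : ℤ)} := by
      simp [Regen.RegenScheme.iN, hT1]
    rcases le_or_gt 1 i with hi | hi
    · have hin : i ∈ {k : ℤ | 1 ≤ k ∧ R.T k ω < (n : ℤ)} := ⟨hi, by omega⟩
      have hle2 : i ≤ R.iN n ω := by rw [hiN]; exact le_csSup hB hin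
      have : R.T i ω ≤ R.T (R.iN n ω) ω := h1.monotone hle2
      omega
    · have : R.T i ω ≤ R.T 0 ω := h1.monotone (by omega)
      omega
  · have hiN : R.iN n ω = 0 := by simp [Regen.RegenScheme.iN, hT1]
    rcases le_or_gt 1 i with hi | hi
    · have : R.T 1 ω ≤ R.T i ω := h1.monotone hi
      omega
    · have : R.T i ω ≤ R.T 0 ω := h1.monotone (by omega)
      rw [hiN] at hlt
      omega

private lemma aux_tim {Ω' : Type*} [MeasurableSpace Ω'] (P' : Measure Ω')
    (Y : ℕ → Ω' → ℝ)
    (h : ∀ ε : ℝ, 0 < ε → ∀ δ : ENNReal, 0 < δ → ∃ N : ℕ, ∀ n, N ≤ n → P' {ω | ε ≤ |Y n ω|} ≤ δ) :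
    TendstoInMeasure P' Y atTop (fun _ => 0) := by
  rw [tendstoInMeasure_iff_dist]
  intro ε hε
  simp only [Real.dist_eq, sub_zero]
  exact ENNReal.tendsto_atTop_zero.mpr (fun δ hδ => h ε hε δ hδ)

/-- The set of trajectories with no renewal in the window `[m - c, m)`. -/
private def winFree (α : Type*) (c : ℕ) (m : ℤ) : Set (ℤ → α × Prop) :=
  {z | ∀ t : ℤ, m - (c : ℤ) ≤ t → t < m → ¬ (z t).2}

private lemma mem_winFree {α : Type*} {c : ℕ} {m : ℤ} {z : ℤ → α × Prop} :
    z ∈ winFree α c m ↔ ∀ t : ℤ, m - (c : ℤ) ≤ t → t < m → ¬ (z t).2 := Iff.rfl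

private lemma measurableSet_winFree (α : Type*) [MeasurableSpace α] (c : ℕ) (m : ℤ) :
    MeasurableSet (winFree α c m) := by
  have hrw : winFree α c m =
      ⋂ (t : ℤ), ⋂ (_ : m - (c : ℤ) ≤ t), ⋂ (_ : t < m), {z : ℤ → α × Prop | (z t).2}ᶜ := by
    ext z
    simp only [winFree, Set.mem_setOf_eq, Set.mem_iInter, Set.mem_compl_iff]
  rw [hrw]
  exact MeasurableSet.iInter fun t => MeasurableSet.iInter fun _ => MeasurableSet.iInter fun _ =>
    (measurableSet_setOf.mpr (measurable_snd.comp (measurable_pi_apply t))).compl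

private lemma preimage_shift_winFree (α : Type*) (c : ℕ) (m : ℤ) :
    (fun (z : ℤ → α × Prop) (t : ℤ) => z (t + 1)) ⁻¹' winFree α c m = winFree α c (m + 1) := by
  ext z
  simp only [Set.mem_preimage, mem_winFree]
  constructor
  · intro h t ht1 ht2
    have h' := h (t - 1) (by omega) (by omega)
    have he : t - 1 + 1 = t := by omega
    rwa [he] at h'
  · intro h t ht1 ht2
    exact h (t + 1) (by omega) (by omega)

private lemma measurable_jointProc (R : Regen.RegenScheme P X) (hXm : ∀ i, Measurable (X i)) :
    Measurable (Regen.jointProc R.T X) := by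
  apply measurable_pi_lambda
  intro t
  have h1 : Measurable fun ω => (∃ i : ℤ, R.T i ω = t : Prop) := by
    apply measurableSet_setOf.mp
    rw [Set.setOf_exists]
    exact MeasurableSet.iUnion fun i =>
      show MeasurableSet (R.T i ⁻¹' {t}) from (R.measT i) MeasurableSpace.measurableSet_top
  exact (hXm t).prodMk h1

private lemma measure_winFree_eq [IsProbabilityMeasure P]
    (R : Regen.RegenScheme P X) (hXm : ∀ i, Measurable (X i)) (c : ℕ) (n : ℕ) :
    Measure.map (Regen.jointProc R.T X) P (winFree E c (n : ℤ)) =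
      Measure.map (Regen.jointProc R.T X) P (winFree E c 0) := by
  have hSmeas : Measurable (fun (z : ℤ → E × Prop) (t : ℤ) => z (t + 1)) :=
    measurable_pi_lambda _ fun t => measurable_pi_apply (t + 1)
  have hstat : ∀ m : ℤ, Measure.map (Regen.jointProc R.T X) P (winFree E c m) =
      Measure.map (Regen.jointProc R.T X) P (winFree E c (m + 1)) := by
    intro m
    conv_lhs => rw [← R.joint_stationary]
    rw [Measure.map_apply hSmeas (measurableSet_winFree E c m), preimage_shift_winFree]
  induction n with
  | zero => norm_num
  | succ k ih =>
    have hcast : ((k + 1 : ℕ) : ℤ) = (k : ℤ) + 1 := by push_cast; ring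
    rw [hcast, ← hstat (k : ℤ), ih]

end AuxLemmas

/-- Lemma 1 of Maillard–Schöpfer: the boundary terms of the regenerative decomposition of
`S_n/√n` vanish in probability. -/
theorem boundary_terms_tendsto_zero_inProbability
    {E : Type*} [Fintype E] [Nonempty E] [MeasurableSpace E] [MeasurableSingletonClass E]
    {Ω : Type*} [MeasurableSpace Ω] (P : Measure Ω) [IsProbabilityMeasure P]
    (X : ℤ → Ω → E) (hXm : ∀ i, Measurable (X i))
    (R : Regen.RegenScheme P X) (f : E → ℝ) :
    TendstoInMeasure P
        (fun (n : ℕ) ω => (∑ i ∈ Finset.Ico (0 : ℤ) (R.T 1 ω), f (X i ω)) / Real.sqrt n)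
        atTop (fun _ => 0) ∧
      TendstoInMeasure P
        (fun (n : ℕ) ω =>
          (∑ i ∈ Finset.Ico (R.T (R.iN n ω) ω) (n : ℤ), f (X i ω)) / Real.sqrt n)
        atTop (fun _ => 0) := by
  classical
  set M : ℝ := 1 + ∑ y : E, |f y| with hMdef
  have hM0 : 0 < M := by
    have h0 : (0 : ℝ) ≤ ∑ y : E, |f y| := Finset.sum_nonneg fun y _ => abs_nonneg _
    rw [hMdef]; linarith
  have hgood : ∀ᵐ ω ∂P, (StrictMono fun i => R.T i ω) ∧ R.T 0 ω ≤ 0 ∧ 0 < R.T 1 ω :=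
    R.mono.and (R.T0_le.and R.T1_pos)
  set G : Set Ω := {ω | (StrictMono fun i => R.T i ω) ∧ R.T 0 ω ≤ 0 ∧ 0 < R.T 1 ω} with hGdef
  have hGc : P Gᶜ = 0 := by
    have h0 := MeasureTheory.ae_iff.mp hgood
    simpa [hGdef, Set.compl_setOf] using h0
  have hPsplit : ∀ s : Set Ω, P s ≤ P (s ∩ G) + P Gᶜ := by
    intro s
    calc P s ≤ P ((s ∩ G) ∪ Gᶜ) := by
          refine measure_mono fun ω hω => ?_
          by_cases h : ω ∈ G
          · exact Or.inl ⟨hω, h⟩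
          · exact Or.inr h
      _ ≤ P (s ∩ G) + P Gᶜ := measure_union_le _ _
  constructor
  · -- first boundary term
    apply aux_tim
    intro ε hε δ hδ
    obtain ⟨c, hc⟩ : ∃ c : ℕ, P {ω | (c : ℤ) < R.T 1 ω} ≤ δ := by
      have h1 : ∀ c : ℕ, MeasurableSet {ω | (c : ℤ) < R.T 1 ω} := fun c =>
        show MeasurableSet (R.T 1 ⁻¹' {z : ℤ | (c : ℤ) < z}) from
          (R.measT 1) MeasurableSpace.measurableSet_top
      have h2 : Antitone fun c : ℕ => {ω | (c : ℤ) < R.T 1 ω} := by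
        intro a b hab ω hω
        simp only [Set.mem_setOf_eq] at hω ⊢
        omega
      have h3 : (⋂ c : ℕ, {ω | (c : ℤ) < R.T 1 ω}) = ∅ := by
        ext ω
        simp only [Set.mem_iInter, Set.mem_setOf_eq, Set.mem_empty_iff_false, iff_false,
          not_forall, not_lt]
        exact ⟨(R.T 1 ω).toNat, by omega⟩
      have h4 := MeasureTheory.tendsto_measure_iInter_atTop
        (fun c => (h1 c).nullMeasurableSet) h2 ⟨0, MeasureTheory.measure_ne_top P _⟩
      rw [h3] at h4
      simp only [measure_empty] at h4
      obtain ⟨c, hc⟩ := ENNReal.tendsto_atTop_zero.mp h4 δ hδ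
      exact ⟨c, hc c le_rfl⟩
    obtain ⟨N, hN⟩ : ∃ N : ℕ, ∀ n, N ≤ n → M * c < ε * Real.sqrt n ∧ 1 ≤ n := by
      refine ⟨⌈(M * c / ε) ^ 2⌉₊ + 1, fun n hn => ?_⟩
      have h1 : (M * c / ε) ^ 2 < (n : ℝ) := by
        have h2 := Nat.le_ceil ((M * c / ε) ^ 2)
        have h3 : (⌈(M * c / ε) ^ 2⌉₊ : ℝ) + 1 ≤ (n : ℝ) := by exact_mod_cast hn
        linarith
      have h2 : M * c / ε < Real.sqrt n :=
        (Real.lt_sqrt (by positivity)).mpr h1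
      refine ⟨?_, by omega⟩
      calc M * c = (M * c / ε) * ε := by field_simp
        _ < Real.sqrt n * ε := by
            exact mul_lt_mul_of_pos_right h2 hε
        _ = ε * Real.sqrt n := by ring
    refine ⟨N, fun n hn => ?_⟩
    obtain ⟨hn1, hn2⟩ := hN n hn
    have hsq : (0 : ℝ) < Real.sqrt n := Real.sqrt_pos.mpr (by exact_mod_cast hn2)
    have hsub : {ω | ε ≤ |(∑ i ∈ Finset.Ico (0 : ℤ) (R.T 1 ω), f (X i ω)) / Real.sqrt n|} ∩ G
        ⊆ {ω | (c : ℤ) < R.T 1 ω} := by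
      rintro ω ⟨hω, hg⟩
      simp only [Set.mem_setOf_eq] at hω ⊢
      rw [abs_div, abs_of_nonneg hsq.le, le_div_iff₀ hsq] at hω
      have h2 : |∑ i ∈ Finset.Ico (0 : ℤ) (R.T 1 ω), f (X i ω)|
          ≤ ((Finset.Ico (0 : ℤ) (R.T 1 ω)).card : ℝ) * M := aux_sum_bound f _ _
      have hcard : (Finset.Ico (0 : ℤ) (R.T 1 ω)).card = (R.T 1 ω).toNat := by
        rw [Int.card_Ico]; simp
      rw [hcard] at h2
      have hcc : (c : ℝ) < ((R.T 1 ω).toNat : ℝ) := by nlinarith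
      have hcc' : c < (R.T 1 ω).toNat := by exact_mod_cast hcc
      omega
    calc P {ω | ε ≤ |(∑ i ∈ Finset.Ico (0 : ℤ) (R.T 1 ω), f (X i ω)) / Real.sqrt n|}
        ≤ P ({ω | ε ≤ |(∑ i ∈ Finset.Ico (0 : ℤ) (R.T 1 ω), f (X i ω)) / Real.sqrt n|} ∩ G)
            + P Gᶜ := hPsplit _
      _ ≤ P {ω | (c : ℤ) < R.T 1 ω} + 0 := add_le_add (measure_mono hsub) (le_of_eq hGc)
      _ ≤ δ := by rw [add_zero]; exact hc
  · -- second boundary term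
    apply aux_tim
    intro ε hε δ hδ
    obtain ⟨c, hc⟩ : ∃ c : ℕ, P {ω | R.T (-1) ω < -(c : ℤ)} ≤ δ := by
      have h1 : ∀ c : ℕ, MeasurableSet {ω | R.T (-1) ω < -(c : ℤ)} := fun c =>
        show MeasurableSet (R.T (-1) ⁻¹' {z : ℤ | z < -(c : ℤ)}) from
          (R.measT (-1)) MeasurableSpace.measurableSet_top
      have h2 : Antitone fun c : ℕ => {ω | R.T (-1) ω < -(c : ℤ)} := by
        intro a b hab ω hω
        simp only [Set.mem_setOf_eq] at hω ⊢
        omega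
      have h3 : (⋂ c : ℕ, {ω | R.T (-1) ω < -(c : ℤ)}) = ∅ := by
        ext ω
        simp only [Set.mem_iInter, Set.mem_setOf_eq, Set.mem_empty_iff_false, iff_false,
          not_forall, not_lt]
        exact ⟨(-(R.T (-1) ω)).toNat, by omega⟩
      have h4 := MeasureTheory.tendsto_measure_iInter_atTop
        (fun c => (h1 c).nullMeasurableSet) h2 ⟨0, MeasureTheory.measure_ne_top P _⟩
      rw [h3] at h4
      simp only [measure_empty] at h4
      obtain ⟨c, hc⟩ := ENNReal.tendsto_atTop_zero.mp h4 δ hδ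
      exact ⟨c, hc c le_rfl⟩
    have hjm : Measurable (Regen.jointProc R.T X) := measurable_jointProc R hXm
    have hB0 : Measure.map (Regen.jointProc R.T X) P (winFree E c 0)
        ≤ P {ω | R.T (-1) ω < -(c : ℤ)} := by
      rw [Measure.map_apply hjm (measurableSet_winFree E c 0)]
      have hsub0 : Regen.jointProc R.T X ⁻¹' winFree E c 0
          ⊆ {ω | R.T (-1) ω < -(c : ℤ)} ∪ Gᶜ := by
        intro ω hω
        by_cases hg : ω ∈ G
        · left
          simp only [Set.mem_preimage, mem_winFree] at hω
          simp only [Set.mem_setOf_eq]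
          by_contra hcon
          push_neg at hcon
          obtain ⟨hg1, hg2, hg3⟩ := hg
          have h1 : R.T (-1) ω < R.T 0 ω := hg1 (show (-1 : ℤ) < 0 by omega)
          have h2 := hω (R.T (-1) ω) (by omega) (by omega)
          simp only [Regen.jointProc] at h2
          exact h2 ⟨-1, rfl⟩
        · exact Or.inr hg
      calc P (Regen.jointProc R.T X ⁻¹' winFree E c 0)
          ≤ P ({ω | R.T (-1) ω < -(c : ℤ)} ∪ Gᶜ) := measure_mono hsub0
        _ ≤ P {ω | R.T (-1) ω < -(c : ℤ)} + P Gᶜ := measure_union_le _ _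
        _ = P {ω | R.T (-1) ω < -(c : ℤ)} := by rw [hGc, add_zero]
    obtain ⟨N, hN⟩ : ∃ N : ℕ, ∀ n, N ≤ n → M * c < ε * Real.sqrt n ∧ 1 ≤ n ∧ c < n := by
      refine ⟨⌈(M * c / ε) ^ 2⌉₊ + c + 1, fun n hn => ?_⟩
      have h1 : (M * c / ε) ^ 2 < (n : ℝ) := by
        have h2 := Nat.le_ceil ((M * c / ε) ^ 2)
        have h3 : (⌈(M * c / ε) ^ 2⌉₊ : ℝ) + (c : ℝ) + 1 ≤ (n : ℝ) := by exact_mod_cast hn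
        have h4 : (0 : ℝ) ≤ (c : ℝ) := Nat.cast_nonneg c
        linarith
      have h2 : M * c / ε < Real.sqrt n :=
        (Real.lt_sqrt (by positivity)).mpr h1
      refine ⟨?_, by omega, by omega⟩
      calc M * c = (M * c / ε) * ε := by field_simp
        _ < Real.sqrt n * ε := mul_lt_mul_of_pos_right h2 hε
        _ = ε * Real.sqrt n := by ring
    refine ⟨N, fun n hn => ?_⟩
    obtain ⟨hn1, hn2, hn3⟩ := hN n hn
    have hsq : (0 : ℝ) < Real.sqrt n := Real.sqrt_pos.mpr (by exact_mod_cast hn2)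
    have hsub : {ω | ε ≤ |(∑ i ∈ Finset.Ico (R.T (R.iN n ω) ω) (n : ℤ), f (X i ω))
          / Real.sqrt n|} ∩ G
        ⊆ Regen.jointProc R.T X ⁻¹' winFree E c (n : ℤ) := by
      rintro ω ⟨hω, hg⟩
      obtain ⟨hg1, hg2, hg3⟩ := hg
      simp only [Set.mem_setOf_eq] at hω
      rw [abs_div, abs_of_nonneg hsq.le, le_div_iff₀ hsq] at hω
      have h2 : |∑ i ∈ Finset.Ico (R.T (R.iN n ω) ω) (n : ℤ), f (X i ω)|
          ≤ ((Finset.Ico (R.T (R.iN n ω) ω) (n : ℤ)).card : ℝ) * M := aux_sum_bound f _ _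
      have hcard : (Finset.Ico (R.T (R.iN n ω) ω) (n : ℤ)).card
          = ((n : ℤ) - R.T (R.iN n ω) ω).toNat := Int.card_Ico _ _
      rw [hcard] at h2
      have hcc : (c : ℝ) < (((n : ℤ) - R.T (R.iN n ω) ω).toNat : ℝ) := by nlinarith
      have hcc' : c < ((n : ℤ) - R.T (R.iN n ω) ω).toNat := by exact_mod_cast hcc
      have hlt : R.T (R.iN n ω) ω < (n : ℤ) - c := by omega
      simp only [Set.mem_preimage, mem_winFree]
      intro t ht1 ht2
      simp only [Regen.jointProc]
      rintro ⟨i, hi⟩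
      exact aux_no_renewal R hg1 hg2 hg3 (by exact_mod_cast hn3) hlt t ht1 ht2 i hi
    calc P {ω | ε ≤ |(∑ i ∈ Finset.Ico (R.T (R.iN n ω) ω) (n : ℤ), f (X i ω)) / Real.sqrt n|}
        ≤ P ({ω | ε ≤ |(∑ i ∈ Finset.Ico (R.T (R.iN n ω) ω) (n : ℤ), f (X i ω))
            / Real.sqrt n|} ∩ G) + P Gᶜ := hPsplit _
      _ ≤ P (Regen.jointProc R.T X ⁻¹' winFree E c (n : ℤ)) + 0 :=
          add_le_add (measure_mono hsub) (le_of_eq hGc)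
      _ = Measure.map (Regen.jointProc R.T X) P (winFree E c (n : ℤ)) := by
          rw [add_zero, Measure.map_apply hjm (measurableSet_winFree E c (n : ℤ))]
      _ = Measure.map (Regen.jointProc R.T X) P (winFree E c 0) :=
          measure_winFree_eq R hXm c n
      _ ≤ P {ω | R.T (-1) ω < -(c : ℤ)} := hB0
      _ ≤ δ := hc
end

section
/- Let E be a finite set and, for each integer k ≤ −1, let φ_k : E^{ℤ_{≤0}} → ℝ be a measurable function with ∑_{k≤−1} sup|φ_k| < ∞. Define the Gibbsian g-function g(ω_0 | ω_{−∞}^{−1}) = exp(−∑_{k≤−1} φ_k(ω_{−∞}^{0})) / ∑_{σ_0∈E} exp(−∑_{k≤−1} φ_k(ω_{−∞}^{−1} σ_0)). Then for every function h : E → ℝ and all pasts ω_{−∞}^{−1}, σ_{−∞}^{−1} ∈ E^{ℤ_{<0}}: |∑_{x∈E} h(x)(g(x | ω_{−∞}^{−1}) − g(x | σ_{−∞}^{−1}))| ≤ (sup_{x∈E} |h(x)|) · sup_{x∈E} |∑_{k≤−1} [φ_k(ω_{−∞}^{−1} x) − φ_k(σ_{−∞}^{−1} x)]|, where ω_{−∞}^{−1}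 x denotes the configuration on ℤ_{≤0} equal to ω on negative coordinates and to x at coordinate 0. -/
open MeasureTheory ProbabilityTheory Filter Finset Topology

open MeasureTheory ProbabilityTheory Filter Finset Topology

/-- One-sided configurations `ω_{-∞}^0`: prepend the present value `x` to the past `ω`. -/
def consPast {E : Type*} (x : E) (ω : Regen.Past E) : ℕ → E :=
  fun n => match n with
  | 0 => x
  | m + 1 => ω m


lemma weighted_abs_dev_le {E : Type*} [Fintype E] (w d : E → ℝ) (D : ℝ)
    (hw : ∀ x, 0 ≤ w x) (hw1 : ∑ x, w x = 1) (hd : ∀ x, |d x| ≤ D) :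
    ∑ x, w x * |d x - ∑ y, w y * d y| ≤ D := by
  set m := ∑ y, w y * d y with hm
  have hmD : |m| ≤ D := by
    calc |m| ≤ ∑ y, |w y * d y| := Finset.abs_sum_le_sum_abs _ _
      _ ≤ ∑ y, w y * D := Finset.sum_le_sum fun y _ => by
          rw [abs_mul, abs_of_nonneg (hw y)]
          exact mul_le_mul_of_nonneg_left (hd y) (hw y)
      _ = D := by rw [← Finset.sum_mul, hw1, one_mul]
  set P := ∑ x, w x * max (d x - m) 0 with hP
  set N := ∑ x, w x * max (m - d x) 0 with hN
  have habs : ∀ x, |d x - m| = max (d x - m) 0 + max (m - d x) 0 := fun x => by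
    rcases le_total m (d x) with h | h
    · rw [max_eq_left (by linarith), max_eq_right (by linarith), abs_of_nonneg (by linarith)]
      ring
    · rw [max_eq_right (by linarith), max_eq_left (by linarith), abs_of_nonpos (by linarith)]
      ring
  have hsum : ∑ x, w x * |d x - m| = P + N := by
    rw [hP, hN, ← Finset.sum_add_distrib]
    exact Finset.sum_congr rfl fun x _ => by rw [habs x, mul_add]
  have hPeqN : P = N := by
    have h0 : P - N = 0 := by
      rw [hP, hN, ← Finset.sum_sub_distrib]
      have : ∀ x ∈ Finset.univ, w x * max (d x - m) 0 - w x * max (m - d x) 0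
          = w x * d x - w x * m := fun x _ => by
        rcases le_total m (d x) with h | h
        · rw [max_eq_left (by linarith), max_eq_right (by linarith)]; ring
        · rw [max_eq_right (by linarith), max_eq_left (by linarith)]; ring
      rw [Finset.sum_congr rfl this, Finset.sum_sub_distrib, ← hm, ← Finset.sum_mul, hw1]
      ring
    linarith
  -- bounds
  set s := Finset.univ.filter (fun x => m ≤ d x) with hs
  set α := ∑ x ∈ s, w x with hα
  set β := ∑ x ∈ Finset.univ.filter (fun x => ¬ m ≤ d x), w x with hβ
  have hαβ : α + β = 1 := by rw [hα, hβ, Finset.sum_filter_add_sum_filter_not, hw1]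
  have hα0 : 0 ≤ α := Finset.sum_nonneg fun x _ => hw x
  have hβ0 : 0 ≤ β := Finset.sum_nonneg fun x _ => hw x
  have hmltD : m ≤ D := le_of_abs_le hmD
  have hmgtD : -D ≤ m := neg_le_of_abs_le hmD
  have hPb : P ≤ α * (D - m) := by
    have hPs : P = ∑ x ∈ s, w x * max (d x - m) 0 := by
      rw [hP]
      refine (Finset.sum_subset (Finset.filter_subset _ _) fun x _ hx => ?_).symm
      rw [Finset.mem_filter] at hx
      push_neg at hx
      have : d x < m := hx (Finset.mem_univ x)
      rw [max_eq_right (by linarith)]; ring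
    rw [hPs, hα, Finset.sum_mul]
    refine Finset.sum_le_sum fun x hx => ?_
    rw [hs] at hx
    rw [Finset.mem_filter] at hx
    have h1 : max (d x - m) 0 ≤ D - m := by
      apply max_le (by have := le_of_abs_le (hd x); linarith) (by linarith)
    exact mul_le_mul_of_nonneg_left h1 (hw x)
  have hNb : N ≤ β * (D + m) := by
    have hNs : N = ∑ x ∈ Finset.univ.filter (fun x => ¬ m ≤ d x), w x * max (m - d x) 0 := by
      rw [hN]
      refine (Finset.sum_subset (Finset.filter_subset _ _) fun x _ hx => ?_).symm
      rw [Finset.mem_filter] at hx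
      push_neg at hx
      have : m ≤ d x := hx (Finset.mem_univ x)
      rw [max_eq_right (by linarith)]; ring
    rw [hNs, hβ, Finset.sum_mul]
    refine Finset.sum_le_sum fun x hx => ?_
    have h1 : max (m - d x) 0 ≤ D + m := by
      apply max_le (by have := neg_le_of_abs_le (hd x); linarith) (by linarith)
    exact mul_le_mul_of_nonneg_left h1 (hw x)
  have hP0 : 0 ≤ P := Finset.sum_nonneg fun x _ => mul_nonneg (hw x) (le_max_right _ _)
  have hN0 : 0 ≤ N := Finset.sum_nonneg fun x _ => mul_nonneg (hw x) (le_max_right _ _)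
  rw [hsum]
  have hDm0 : 0 ≤ D - m := by linarith
  have hDm0' : 0 ≤ D + m := by linarith
  have hD0 : 0 ≤ D := by linarith
  have hPN2 : P * N ≤ (α * (D - m)) * (β * (D + m)) :=
    mul_le_mul hPb hNb hN0 (mul_nonneg hα0 hDm0)
  have e2 : 4 * (α * β) ≤ 1 := by nlinarith [sq_nonneg (α - β)]
  have e3 : (D - m) * (D + m) ≤ D ^ 2 := by nlinarith [sq_nonneg m]
  have e4 : 0 ≤ (D - m) * (D + m) := mul_nonneg hDm0 hDm0'
  have e1 : (P + N) ^ 2 ≤ (4 * (α * β)) * ((D - m) * (D + m)) := by nlinarith [hPN2]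
  have e5 : (4 * (α * β)) * ((D - m) * (D + m)) ≤ 1 * D ^ 2 :=
    mul_le_mul e2 e3 e4 zero_le_one
  nlinarith [e1, e5]

lemma gibbs_core {E : Type*} [Fintype E] [Nonempty E] (a b h : E → ℝ) (H D : ℝ)
    (hH : ∀ x, |h x| ≤ H) (hD : ∀ x, |a x - b x| ≤ D) :
    |∑ x, h x * (Real.exp (-a x) / (∑ y, Real.exp (-a y))
        - Real.exp (-b x) / (∑ y, Real.exp (-b y)))| ≤ H * D := by
  set d : E → ℝ := fun x => a x - b x with hd
  set e : ℝ → E → ℝ := fun t x => Real.exp (-(b x + t * d x)) with he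
  set Z : ℝ → ℝ := fun t => ∑ y, e t y with hZdef
  have hZpos : ∀ t, 0 < Z t := fun t =>
    Finset.sum_pos (fun y _ => Real.exp_pos _) Finset.univ_nonempty
  set S : ℝ → ℝ := fun t => ∑ y, d y * e t y with hSdef
  set F : ℝ → ℝ := fun t => ∑ x, h x * (e t x / Z t) with hF
  set F' : ℝ → ℝ := fun t => ∑ x, h x * ((e t x / Z t) * (S t / Z t - d x)) with hF'def
  have hnum : ∀ x t, HasDerivAt (fun t => e t x) (e t x * (-(d x))) t := by
    intro x t
    have h1 : HasDerivAt (fun t : ℝ => -(b x + t * d x)) (-(d x)) t := by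
      have h2 := (((hasDerivAt_id t).mul_const (d x)).const_add (b x)).neg
      rw [one_mul] at h2
      exact h2
    exact h1.exp
  have hZ' : ∀ t, HasDerivAt Z (-(S t)) t := by
    intro t
    have := HasDerivAt.fun_sum (fun y (_ : y ∈ Finset.univ) => hnum y t)
    refine this.congr_deriv ?_
    rw [hSdef]
    simp only [← Finset.sum_neg_distrib]
    exact Finset.sum_congr rfl fun y _ => by ring
  have hderiv : ∀ t, HasDerivAt F (F' t) t := by
    intro t
    have hsum := HasDerivAt.fun_sum (fun x (_ : x ∈ Finset.univ) =>
      (((hnum x t).div (hZ' t) (hZpos t).ne').const_mul (h x)))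
    refine hsum.congr_deriv ?_
    rw [hF'def]
    refine Finset.sum_congr rfl fun x _ => ?_
    have hZne : Z t ≠ 0 := (hZpos t).ne'
    field_simp
    ring
  have hcont : ContinuousOn F (Set.Icc (0:ℝ) 1) := fun t _ =>
    (hderiv t).continuousAt.continuousWithinAt
  obtain ⟨c, _, hceq⟩ := exists_hasDerivAt_eq_slope F F' (by norm_num : (0:ℝ) < 1)
    hcont (fun x _ => hderiv x)
  have hslope : F 1 - F 0 = F' c := by rw [hceq]; norm_num
  have hF1 : F 1 = ∑ x, h x * (Real.exp (-a x) / (∑ y, Real.exp (-a y))) := by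
    rw [hF]
    simp only [he, hZdef, hd]
    norm_num
  have hF0 : F 0 = ∑ x, h x * (Real.exp (-b x) / (∑ y, Real.exp (-b y))) := by
    rw [hF]
    simp only [he, hZdef, hd]
    norm_num
  have hgoal : ∑ x, h x * (Real.exp (-a x) / (∑ y, Real.exp (-a y))
      - Real.exp (-b x) / (∑ y, Real.exp (-b y))) = F' c := by
    rw [← hslope, hF1, hF0, ← Finset.sum_sub_distrib]
    exact Finset.sum_congr rfl fun x _ => by ring
  rw [hgoal]
  -- bound F' c
  set w : E → ℝ := fun x => e c x / Z c with hw
  have hw0 : ∀ x, 0 ≤ w x := fun x => div_nonneg (Real.exp_pos _).le (hZpos c).le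
  have hw1 : ∑ x, w x = 1 := by
    rw [hw, ← Finset.sum_div]
    exact div_self (hZpos c).ne'
  have hmw : S c / Z c = ∑ y, w y * d y := by
    rw [hSdef, hw, Finset.sum_div]
    exact Finset.sum_congr rfl fun y _ => by ring
  have hH0 : 0 ≤ H := (abs_nonneg _).trans (hH (Classical.arbitrary E))
  calc |F' c| ≤ ∑ x, |h x * (w x * (S c / Z c - d x))| := by
        rw [hF'def]; exact Finset.abs_sum_le_sum_abs _ _
    _ ≤ ∑ x, H * (w x * |d x - ∑ y, w y * d y|) := by
        refine Finset.sum_le_sum fun x _ => ?_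
        rw [abs_mul, abs_mul, abs_of_nonneg (hw0 x), ← hmw, abs_sub_comm]
        exact mul_le_mul (hH x) le_rfl (mul_nonneg (hw0 x) (abs_nonneg _)) hH0
    _ = H * ∑ x, w x * |d x - ∑ y, w y * d y| := by rw [Finset.mul_sum]
    _ ≤ H * D := by
        refine mul_le_mul_of_nonneg_left ?_ hH0
        exact weighted_abs_dev_le w d D hw0 hw1 fun x => hD x

/-- Lemma 2 of Maillard–Schöpfer (following Simon, Lemma V.1.4): uniform bound on the
variation of a Gibbsian `g`-function in terms of the variation of the interaction. -/
theorem gibbs_g_function_variation_bound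
    {E : Type*} [Fintype E] [Nonempty E] [MeasurableSpace E] [MeasurableSingletonClass E]
    (ψ : ℕ → (ℕ → E) → ℝ) (hmeas : ∀ j, Measurable (ψ j))
    (M : ℕ → ℝ) (hM : ∀ j c, |ψ j c| ≤ M j) (hMsum : Summable M)
    (g : E → Regen.Past E → ℝ)
    (hg : ∀ x ω, g x ω = Real.exp (-∑' j : ℕ, ψ j (consPast x ω))
      / ∑ y : E, Real.exp (-∑' j : ℕ, ψ j (consPast y ω)))
    (h : E → ℝ) (ω σ : Regen.Past E) :
    |∑ x : E, h x * (g x ω - g x σ)|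
      ≤ (⨆ x : E, |h x|)
        * ⨆ x : E, |∑' j : ℕ, (ψ j (consPast x ω) - ψ j (consPast x σ))| := by
  have hsummable : ∀ c : ℕ → E, Summable fun j => ψ j c := fun c =>
    Summable.of_norm_bounded hMsum fun j => by
      simpa [Real.norm_eq_abs] using hM j c
  set a : E → ℝ := fun x => ∑' j : ℕ, ψ j (consPast x ω) with ha
  set b : E → ℝ := fun x => ∑' j : ℕ, ψ j (consPast x σ) with hb
  have hsub : ∀ x, ∑' j : ℕ, (ψ j (consPast x ω) - ψ j (consPast x σ)) = a x - b x :=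
    fun x => Summable.tsum_sub (hsummable _) (hsummable _)
  set H : ℝ := ⨆ x : E, |h x| with hHdef
  set D : ℝ := ⨆ x : E, |∑' j : ℕ, (ψ j (consPast x ω) - ψ j (consPast x σ))| with hDdef
  have hH : ∀ x, |h x| ≤ H := fun x => by
    rw [hHdef]
    exact le_ciSup (Set.Finite.bddAbove (Set.finite_range fun x => |h x|)) x
  have hD : ∀ x, |a x - b x| ≤ D := fun x => by
    rw [← hsub x, hDdef]
    exact le_ciSup (Set.Finite.bddAbove (Set.finite_range
      fun x => |∑' j : ℕ, (ψ j (consPast x ω) - ψ j (consPast x σ))|)) x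
  have key := gibbs_core a b h H D hH hD
  have heq : ∑ x : E, h x * (g x ω - g x σ)
      = ∑ x : E, h x * (Real.exp (-a x) / (∑ y, Real.exp (-a y))
          - Real.exp (-b x) / (∑ y, Real.exp (-b y))) := by
    refine Finset.sum_congr rfl fun x _ => ?_
    rw [hg x ω, hg x σ]
  rw [heq]
  exact key
end

section
/- Let E be a two-element alphabet and g a g-function on E. For k ≥ 0 define a_k = inf_{σ∈E^{[−k,−1]}} ∑_{x∈E} inf_{ω∈E^{ℤ_{<−k}}} g(x | σω) and the k-th variation var_k = sup{ |g(x | ω_{−∞}^{−1}) − g(x | σ_{−∞}^{−1})| : x ∈ E, ω, σ ∈ E^{ℤ_{<0}} with ω_{−k}^{−1} = σ_{−k}^{−1} } (for k = 0 no coordinates are required to agree). Then a_k = 1 − var_k for every k ≥ 0. -/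
open MeasureTheory ProbabilityTheory Filter Finset Topology

open MeasureTheory ProbabilityTheory Filter Finset Topology

private lemma ciInf_const_sub_eq' {ι : Type*} [Nonempty ι] (f : ι → ℝ)
    (hf : BddAbove (Set.range f)) (c : ℝ) : (⨅ i, (c - f i)) = c - ⨆ i, f i := by
  obtain ⟨M, hM⟩ := hf
  have hM' : ∀ i, f i ≤ M := fun i => hM ⟨i, rfl⟩
  have hbb : BddBelow (Set.range fun i => c - f i) := by
    refine ⟨c - M, ?_⟩
    rintro y ⟨i, rfl⟩
    have := hM' i; dsimp; linarith
  apply le_antisymm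
  · refine le_of_forall_pos_le_add fun ε hε => ?_
    obtain ⟨i, hi⟩ := exists_lt_of_lt_ciSup
      (show (⨆ i, f i) - ε < ⨆ i, f i by linarith)
    have h1 : (⨅ i, (c - f i)) ≤ c - f i := ciInf_le hbb i
    linarith
  · refine le_ciInf fun i => ?_
    have : f i ≤ ⨆ i, f i := le_ciSup ⟨M, hM⟩ i
    linarith

/-- Concatenation of a finite word with a past. -/
private def extPast {E : Type*} (k : ℕ) (σ : Fin k → E) (ω : Regen.Past E) :
    Regen.Past E := fun n => if h : n < k then σ ⟨n, h⟩ else ω (n - k)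

/-- Equation (akvark) of Maillard–Schöpfer: for a two-letter alphabet, `a_k = 1 - var_k`. -/
theorem aSeq_eq_one_sub_varSeq_of_two_letters
    {E : Type*} [Fintype E] [Nonempty E] [MeasurableSpace E] [MeasurableSingletonClass E]
    (hcard : Fintype.card E = 2)
    (g : E → Regen.Past E → ℝ) (hg : Regen.IsGFunction g) (k : ℕ) :
    Regen.aSeq g k = 1 - Regen.varSeq g k := by
  classical
  obtain ⟨a, b, hab, hset⟩ := (Nat.card_eq_two_iff (α := E)).mp
    (by rw [Nat.card_eq_fintype_card]; exact hcard)
  have hmem : ∀ x : E, x = a ∨ x = b := by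
    intro x
    have hx : x ∈ ({a, b} : Set E) := hset ▸ Set.mem_univ x
    simpa using hx
  have huniv : (Finset.univ : Finset E) = {a, b} := by
    ext x
    simp only [Finset.mem_univ, true_iff, Finset.mem_insert, Finset.mem_singleton]
    exact hmem x
  have hsum2 : ∀ f : E → ℝ, ∑ x : E, f x = f a + f b := by
    intro f; rw [huniv, Finset.sum_pair hab]
  have hgb : ∀ ω, g b ω = 1 - g a ω := by
    intro ω
    have := hg.sum_one ω
    rw [hsum2] at this
    linarith
  have hg0 : ∀ x ω, 0 ≤ g x ω := hg.nonneg
  have hg1 : ∀ x ω, g x ω ≤ 1 := by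
    intro x ω
    have h := hg.sum_one ω
    calc g x ω ≤ ∑ y : E, g y ω :=
          Finset.single_le_sum (fun y _ => hg.nonneg y ω) (Finset.mem_univ x)
      _ = 1 := h
  -- bounds on the inner sup/inf
  have hbddA : ∀ τ : Fin k → E, BddAbove (Set.range fun ω => g a (extPast k τ ω)) := by
    intro τ; refine ⟨1, ?_⟩; rintro y ⟨ω, rfl⟩; exact hg1 _ _
  have hbddB : ∀ τ : Fin k → E, BddBelow (Set.range fun ω => g a (extPast k τ ω)) := by
    intro τ; refine ⟨0, ?_⟩; rintro y ⟨ω, rfl⟩; exact hg0 _ _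
  set D : (Fin k → E) → ℝ :=
    fun τ => (⨆ ω, g a (extPast k τ ω)) - ⨅ ω, g a (extPast k τ ω) with hD
  have hDbdd : BddAbove (Set.range D) := (Set.finite_range D).bddAbove
  -- Step 1 : aSeq g k = ⨅ τ, (1 - D τ)
  have hstep1 : Regen.aSeq g k = ⨅ τ : Fin k → E, (1 - D τ) := by
    show (⨅ τ : Fin k → E, ∑ x : E, ⨅ ω : Regen.Past E, g x (extPast k τ ω)) = _
    refine iInf_congr fun τ => ?_
    rw [hsum2]
    have h2 : (⨅ ω : Regen.Past E, g b (extPast k τ ω))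
        = 1 - ⨆ ω, g a (extPast k τ ω) := by
      have h3 : (⨅ ω : Regen.Past E, g b (extPast k τ ω))
          = ⨅ ω : Regen.Past E, (1 - g a (extPast k τ ω)) :=
        iInf_congr fun ω => hgb _
      rw [h3, ciInf_const_sub_eq' _ (hbddA τ)]
    rw [h2]
    simp only [hD]
    ring
  -- Step 2 : varSeq g k = ⨆ τ, D τ
  have hstep2 : Regen.varSeq g k = ⨆ τ : Fin k → E, D τ := by
    unfold Regen.varSeq
    set S : Set ℝ :=
      {d : ℝ | ∃ x : E, ∃ ω σ : Regen.Past E, (∀ i < k, ω i = σ i) ∧ d = |g x ω - g x σ|}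
      with hS
    have hSne : S.Nonempty := by
      refine ⟨0, a, Classical.arbitrary _, Classical.arbitrary _, fun i _ => rfl, by simp⟩
    have hSbdd : BddAbove S := by
      refine ⟨1, ?_⟩
      rintro d ⟨x, ω, σ, -, rfl⟩
      have h1 := hg0 x ω; have h2 := hg1 x ω
      have h3 := hg0 x σ; have h4 := hg1 x σ
      rw [abs_le]; constructor <;> linarith
    -- any element of S involves g a
    have habs : ∀ x : E, ∀ ω σ : Regen.Past E, |g x ω - g x σ| = |g a ω - g a σ| := by
      intro x ω σ
      rcases hmem x with rfl | rfl
      · rfl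
      · rw [hgb, hgb, show (1 - g a ω) - (1 - g a σ) = -(g a ω - g a σ) by ring, abs_neg]
    apply le_antisymm
    · refine csSup_le hSne ?_
      rintro d ⟨x, ω, σ, hagree, rfl⟩
      rw [habs]
      set τ : Fin k → E := fun i => ω i with hτ
      have hω : ω = extPast k τ (fun n => ω (n + k)) := by
        funext n
        by_cases h : n < k
        · simp [extPast, h, hτ]
        · simp only [extPast, dif_neg h]
          rw [Nat.sub_add_cancel (le_of_not_gt h)]
      have hσ : σ = extPast k τ (fun n => σ (n + k)) := by
        funext n
        by_cases h : n < k
        · simp only [extPast, dif_pos h, hτ]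
          exact (hagree n h).symm
        · simp only [extPast, dif_neg h]
          rw [Nat.sub_add_cancel (le_of_not_gt h)]
      have h1 : g a ω ≤ ⨆ ω', g a (extPast k τ ω') := by
        rw [hω]; exact le_ciSup (hbddA τ) _
      have h2 : (⨅ ω', g a (extPast k τ ω')) ≤ g a ω := by
        rw [hω]; exact ciInf_le (hbddB τ) _
      have h3 : g a σ ≤ ⨆ ω', g a (extPast k τ ω') := by
        rw [hσ]; exact le_ciSup (hbddA τ) _
      have h4 : (⨅ ω', g a (extPast k τ ω')) ≤ g a σ := by
        rw [hσ]; exact ciInf_le (hbddB τ) _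
      have h5 : |g a ω - g a σ| ≤ D τ := by
        rw [abs_le]; simp only [hD]; constructor <;> linarith
      exact h5.trans (le_ciSup hDbdd τ)
    · refine ciSup_le fun τ => ?_
      refine le_of_forall_pos_le_add fun ε hε => ?_
      obtain ⟨ω1, hω1⟩ := exists_lt_of_lt_ciSup
        (show (⨆ ω, g a (extPast k τ ω)) - ε / 2 < ⨆ ω, g a (extPast k τ ω) by linarith)
      obtain ⟨ω2, hω2⟩ := exists_lt_of_ciInf_lt
        (show (⨅ ω, g a (extPast k τ ω)) < (⨅ ω, g a (extPast k τ ω)) + ε / 2 by linarith)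
      have hmemS : |g a (extPast k τ ω1) - g a (extPast k τ ω2)| ∈ S := by
        refine ⟨a, extPast k τ ω1, extPast k τ ω2, fun i hi => ?_, rfl⟩
        simp [extPast, hi]
      have habs2 : g a (extPast k τ ω1) - g a (extPast k τ ω2)
          ≤ |g a (extPast k τ ω1) - g a (extPast k τ ω2)| := le_abs_self _
      have hle : |g a (extPast k τ ω1) - g a (extPast k τ ω2)| ≤ sSup S :=
        le_csSup hSbdd hmemS
      simp only [hD]
      linarith
  rw [hstep1, hstep2, ciInf_const_sub_eq' D hDbdd]
end
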